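/- Let X₀,…,X_{n-1} be independent complex-valued random variables with |X_i| = 1 almost surely. Then for every α ≥ 0, P(|CF_n(s) − E[CF_n(s)]| ≥ α) ≤ 2 exp(−α²/8). -/

import Mathlib

open MeasureTheory Finset

noncomputable def ofdm (n : ℕ) (T : ℝ) (x : Fin n → ℂ) (t : ℝ) : ℂ :=
  ((Real.sqrt n : ℝ) : ℂ)⁻¹ *
    ∑ i : Fin n, x i * Complex.exp (Complex.I * ((2 * Real.pi * (i : ℕ) * t / T : ℝ) : ℂ))

noncomputable def crest (n : ℕ) (T : ℝ) (x : Fin n → ℂ) : ℝ :=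
  sSup ((fun t => ‖ofdm n T x t‖) '' Set.Icc (0 : ℝ) T)

/-! ### Auxiliary lemmas -/

lemma exp_le_lin (t c y : ℝ) (hc : 0 < c) (hy : |y| ≤ c) :
    Real.exp (t * y) ≤ Real.cosh (t * c) + (y / c) * Real.sinh (t * c) := by
  obtain ⟨hy1, hy2⟩ := abs_le.mp hy
  have ha : 0 ≤ (c - y) / (2 * c) := by
    apply div_nonneg (by linarith) (by linarith)
  have hb : 0 ≤ (c + y) / (2 * c) := by
    apply div_nonneg (by linarith) (by linarith)
  have hab : (c - y) / (2 * c) + (c + y) / (2 * c) = 1 := by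
    field_simp; ring
  have := convexOn_exp.2 (Set.mem_univ (t * (-c))) (Set.mem_univ (t * c)) ha hb hab
  have hpt : ((c - y) / (2 * c)) • (t * (-c)) + ((c + y) / (2 * c)) • (t * c) = t * y := by
    simp only [smul_eq_mul]; field_simp; ring
  rw [hpt] at this
  refine this.trans (le_of_eq ?_)
  rw [Real.cosh_eq, Real.sinh_eq]
  simp only [smul_eq_mul, mul_neg, Real.exp_neg]
  field_simp; ring

lemma integrable_of_abs_le {E : Type*} [MeasurableSpace E] (κ : Measure E) [IsFiniteMeasure κ]
    (f : E → ℝ) (hf : Measurable f) (C : ℝ) (hC : ∀ z, |f z| ≤ C) : Integrable f κ :=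
  ⟨hf.aestronglyMeasurable,
    MeasureTheory.HasFiniteIntegral.of_bounded (C := C) (ae_of_all _ fun z => by
      simpa [Real.norm_eq_abs] using hC z)⟩

lemma one_step {E : Type*} [MeasurableSpace E] (κ : Measure E) [IsProbabilityMeasure κ]
    (h : E → ℝ) (hm : Measurable h) (c t : ℝ)
    (hosc : ∀ a b, |h a - h b| ≤ c) :
    ∫ z, Real.exp (t * (h z - ∫ w, h w ∂κ)) ∂κ ≤ Real.exp (t ^ 2 * c ^ 2 / 2) := by
  have hne : Nonempty E := by
    by_contra hne
    have : (κ Set.univ) = 1 := measure_univ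
    rw [Set.univ_eq_empty_iff.mpr (not_nonempty_iff.mp hne), measure_empty] at this
    simp at this
  obtain ⟨a0⟩ := hne
  have hc0 : 0 ≤ c := by simpa using hosc a0 a0
  have hbd : ∀ z, |h z| ≤ |h a0| + c := fun z => by
    have := hosc z a0; have := abs_sub_abs_le_abs_sub (h z) (h a0); linarith
  have hint : Integrable h κ := integrable_of_abs_le κ h hm _ hbd
  set m := ∫ w, h w ∂κ with hm_def
  have hmean : ∀ z, |h z - m| ≤ c := by
    intro z
    rw [abs_le]
    constructor
    · have : m ≤ ∫ _, (h z + c) ∂κ := by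
        apply integral_mono hint (integrable_const _)
        intro w; show h w ≤ h z + c; obtain ⟨h1, h2⟩ := abs_le.mp (hosc w z); linarith
      rw [integral_const, probReal_univ] at this
      simp at this; linarith
    · have : (∫ _, (h z - c) ∂κ) ≤ m := by
        apply integral_mono (integrable_const _) hint
        intro w; show h z - c ≤ h w; obtain ⟨h1, h2⟩ := abs_le.mp (hosc z w); linarith
      rw [integral_const, probReal_univ] at this
      simp at this; linarith
  rcases hc0.eq_or_lt with rfl | hcpos
  · have hz : ∀ z, h z - m = 0 := fun z => by have := hmean z; rw [abs_le] at this; linarith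
    simp only [hz, mul_zero, Real.exp_zero]
    simp
  · have hpt : ∀ z, Real.exp (t * (h z - m)) ≤
        Real.cosh (t * c) + ((h z - m) / c) * Real.sinh (t * c) :=
      fun z => exp_le_lin t c (h z - m) hcpos (hmean z)
    have hlhs_int : Integrable (fun z => Real.exp (t * (h z - m))) κ := by
      apply integrable_of_abs_le κ _ (by measurability) (Real.exp (|t| * c))
      intro z
      rw [abs_of_pos (Real.exp_pos _), Real.exp_le_exp]
      calc t * (h z - m) ≤ |t * (h z - m)| := le_abs_self _
        _ = |t| * |h z - m| := abs_mul _ _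
        _ ≤ |t| * c := by gcongr; exact hmean z
    have hint2 : Integrable (fun z => ((h z - m) / c) * Real.sinh (t * c)) κ := by
      simpa using (((hint.sub (integrable_const m)).div_const c).mul_const (Real.sinh (t * c)))
    have hrhs_int : Integrable (fun z =>
        Real.cosh (t * c) + ((h z - m) / c) * Real.sinh (t * c)) κ :=
      (integrable_const _).add hint2
    calc ∫ z, Real.exp (t * (h z - m)) ∂κ
        ≤ ∫ z, (Real.cosh (t * c) + ((h z - m) / c) * Real.sinh (t * c)) ∂κ :=
          integral_mono hlhs_int hrhs_int hpt
      _ = Real.cosh (t * c) := by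
          rw [integral_add (integrable_const _) hint2, integral_const, probReal_univ]
          simp only [ENNReal.toReal_one, smul_eq_mul, one_mul]
          have : ∫ z, ((h z - m) / c) * Real.sinh (t * c) ∂κ
              = (∫ z, (h z - m) ∂κ) / c * Real.sinh (t * c) := by
            rw [integral_mul_const, integral_div]
          rw [this, integral_sub hint (integrable_const _), integral_const, probReal_univ]
          simp [← hm_def]
      _ ≤ Real.exp (t ^ 2 * c ^ 2 / 2) := by
          have := Real.cosh_le_exp_half_sq (t * c)
          rwa [mul_pow] at this

lemma measurable_cons_pair (n:ℕ) :
    Measurable (fun p : ℂ × (Fin n → ℂ) => (Fin.cons p.1 p.2 : Fin (n+1) → ℂ)) := by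
  apply measurable_pi_lambda
  intro i
  refine Fin.cases ?_ ?_ i
  · simpa using measurable_fst
  · intro j; simpa [Function.comp_def] using (measurable_pi_apply j).comp measurable_snd

lemma measurable_cons_snd (n:ℕ) (z : ℂ) :
    Measurable (fun y : Fin n → ℂ => (Fin.cons z y : Fin (n+1) → ℂ)) :=
  (measurable_cons_pair n).comp (measurable_prodMk_left)

lemma cons_eq_symm (n : ℕ) :
    (fun p : ℂ × (Fin n → ℂ) => (Fin.cons p.1 p.2 : Fin (n+1) → ℂ))
      = ⇑(MeasurableEquiv.piFinSuccAbove (fun _ : Fin (n+1) => ℂ) 0).symm := by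
  funext p
  simp [MeasurableEquiv.piFinSuccAbove_symm_apply, Fin.insertNthEquiv, Fin.insertNth_zero]

lemma measurableEmbedding_cons (n : ℕ) :
    MeasurableEmbedding (fun p : ℂ × (Fin n → ℂ) => (Fin.cons p.1 p.2 : Fin (n+1) → ℂ)) := by
  rw [cons_eq_symm]
  exact (MeasurableEquiv.piFinSuccAbove (fun _ : Fin (n+1) => ℂ) 0).symm.measurableEmbedding

lemma measurePreserving_cons (n : ℕ) (ν : Fin (n+1) → Measure ℂ)
    [∀ i, IsProbabilityMeasure (ν i)] :
    MeasurePreserving (fun p : ℂ × (Fin n → ℂ) => (Fin.cons p.1 p.2 : Fin (n+1) → ℂ))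
      ((ν 0).prod (Measure.pi fun j => ν j.succ)) (Measure.pi ν) := by
  have MP := (measurePreserving_piFinSuccAbove ν 0).symm
    (MeasurableEquiv.piFinSuccAbove (fun _ : Fin (n+1) => ℂ) 0)
  simp only [Fin.succAbove_zero] at MP
  rw [cons_eq_symm]
  exact MP
lemma mcdiarmid_mgf : ∀ (n : ℕ) (ν : Fin n → Measure ℂ), (∀ i, IsProbabilityMeasure (ν i)) →
    ∀ (f : (Fin n → ℂ) → ℝ), Measurable f → ∀ (B : ℝ), (∀ x, |f x| ≤ B) →
    ∀ (c : ℝ), (∀ (x y : Fin n → ℂ) (i : Fin n), (∀ j, j ≠ i → x j = y j) → |f x - f y| ≤ c) →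
    ∀ (t : ℝ),
    ∫ x, Real.exp (t * (f x - ∫ y, f y ∂(Measure.pi ν))) ∂(Measure.pi ν)
      ≤ Real.exp (n * (t ^ 2 * c ^ 2 / 2)) := by
  intro n
  induction n with
  | zero =>
    intro ν hν f hf B hB c hosc t
    haveI := hν
    haveI : IsProbabilityMeasure (Measure.pi ν) := inferInstance
    have hzero : ∀ x, f x - ∫ y, f y ∂(Measure.pi ν) = 0 := by
      intro x
      have hfc : (fun y : Fin 0 → ℂ => f y) = fun _ => f x :=
        funext fun y => congrArg f (Subsingleton.elim y x)
      rw [hfc, integral_const, probReal_univ]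
      simp
    simp only [hzero, mul_zero, Real.exp_zero]
    rw [integral_const, probReal_univ]
    simp
  | succ n IH =>
    intro ν hν f hf B hB c hosc t
    haveI := hν
    haveI : ∀ j : Fin n, IsProbabilityMeasure (ν j.succ) := fun j => hν j.succ
    set π' : Measure (Fin n → ℂ) := Measure.pi (fun j => ν j.succ) with hπ'
    haveI : IsProbabilityMeasure π' := inferInstance
    haveI : IsProbabilityMeasure (Measure.pi ν) := inferInstance
    set ρ : Measure (ℂ × (Fin n → ℂ)) := (ν 0).prod π' with hρ
    haveI : IsProbabilityMeasure ρ := by rw [hρ]; infer_instance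
    have MP : MeasurePreserving
        (fun p : ℂ × (Fin n → ℂ) => (Fin.cons p.1 p.2 : Fin (n+1) → ℂ)) ρ (Measure.pi ν) :=
      measurePreserving_cons n ν
    set m := ∫ y, f y ∂(Measure.pi ν) with hm
    have hfint : Integrable f (Measure.pi ν) := integrable_of_abs_le _ f hf B hB
    have hmB : |m| ≤ B := by
      have h1 : |m| ≤ ∫ y, |f y| ∂(Measure.pi ν) := by
        simpa [Real.norm_eq_abs] using norm_integral_le_integral_norm (μ := Measure.pi ν) f
      have h2 : ∫ y, |f y| ∂(Measure.pi ν) ≤ ∫ _, B ∂(Measure.pi ν) :=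
        integral_mono hfint.abs (integrable_const _) (fun y => by simpa using hB y)
      rw [integral_const, probReal_univ] at h2
      simp only [ENNReal.toReal_one, one_smul, smul_eq_mul, one_mul] at h2
      linarith
    have hcomp : ∀ (g : (Fin (n+1) → ℂ) → ℝ), ∫ x, g x ∂(Measure.pi ν)
        = ∫ p, g (Fin.cons p.1 p.2) ∂ρ :=
      fun g => (MP.integral_comp (measurableEmbedding_cons n) g).symm
    set H : ℂ → ℝ := fun z => ∫ y, f (Fin.cons z y) ∂π' with hH
    have hHm : Measurable H := by
      have hsm : StronglyMeasurable (fun p : ℂ × (Fin n → ℂ) =>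
          f (Fin.cons p.1 p.2)) := (hf.comp (measurable_cons_pair n)).stronglyMeasurable
      exact hsm.integral_prod_right'.measurable
    have hHB : ∀ z, |H z| ≤ B := by
      intro z
      have h1 : |H z| ≤ ∫ y, |f (Fin.cons z y)| ∂π' := by
        simpa [Real.norm_eq_abs] using
          norm_integral_le_integral_norm (μ := π') (fun y => f (Fin.cons z y))
      have h2 : ∫ y, |f (Fin.cons z y)| ∂π' ≤ ∫ _, B ∂π' :=
        integral_mono
          ((integrable_of_abs_le _ _ (hf.comp (measurable_cons_snd n z)) B (fun y => hB _)).abs)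
          (integrable_const _) (fun y => by simpa using hB _)
      rw [integral_const, probReal_univ] at h2
      simp only [ENNReal.toReal_one, smul_eq_mul, one_mul] at h2
      linarith
    have hHosc : ∀ a b, |H a - H b| ≤ c := by
      intro a b
      have hint1 : Integrable (fun y => f (Fin.cons a y)) π' :=
        integrable_of_abs_le _ _ (hf.comp (measurable_cons_snd n a)) B (fun y => hB _)
      have hint2 : Integrable (fun y => f (Fin.cons b y)) π' :=
        integrable_of_abs_le _ _ (hf.comp (measurable_cons_snd n b)) B (fun y => hB _)
      have heq : H a - H b = ∫ y, (f (Fin.cons a y) - f (Fin.cons b y)) ∂π' :=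
        (integral_sub hint1 hint2).symm
      rw [heq]
      have h1 : |∫ y, (f (Fin.cons a y) - f (Fin.cons b y)) ∂π'|
          ≤ ∫ y, |f (Fin.cons a y) - f (Fin.cons b y)| ∂π' := by
        simpa [Real.norm_eq_abs] using norm_integral_le_integral_norm (μ := π')
          (fun y => f (Fin.cons a y) - f (Fin.cons b y))
      have hpt : ∀ y, |f (Fin.cons a y) - f (Fin.cons b y)| ≤ c := by
        intro y
        apply hosc _ _ 0
        intro j
        refine Fin.cases ?_ ?_ j
        · intro hj; exact absurd rfl hj
        · intro k _; simp only [Fin.cons_succ]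
      have h2 : ∫ y, |f (Fin.cons a y) - f (Fin.cons b y)| ∂π' ≤ ∫ _, c ∂π' :=
        integral_mono (hint1.sub hint2).abs (integrable_const _) hpt
      rw [integral_const, probReal_univ] at h2
      simp only [ENNReal.toReal_one, smul_eq_mul, one_mul] at h2
      linarith
    have hexpC : ∀ x : Fin (n+1) → ℂ,
        |Real.exp (t * (f x - m))| ≤ Real.exp (|t| * (B + |m|)) := by
      intro x
      rw [abs_of_pos (Real.exp_pos _), Real.exp_le_exp]
      calc t * (f x - m) ≤ |t * (f x - m)| := le_abs_self _
        _ = |t| * |f x - m| := abs_mul _ _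
        _ ≤ |t| * (B + |m|) := by
            apply mul_le_mul_of_nonneg_left _ (abs_nonneg t)
            calc |f x - m| ≤ |f x| + |m| := abs_sub _ _
              _ ≤ B + |m| := by have := hB x; linarith
    have hexpint : Integrable (fun p : ℂ × (Fin n → ℂ) =>
        Real.exp (t * (f (Fin.cons p.1 p.2) - m))) ρ :=
      integrable_of_abs_le _ _
        (Real.measurable_exp.comp ((measurable_const.mul
          ((hf.comp (measurable_cons_pair n)).sub measurable_const))))
        _ (fun p => hexpC _)
    have key : ∫ x, Real.exp (t * (f x - m)) ∂(Measure.pi ν)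
        = ∫ z, ∫ y, Real.exp (t * (f (Fin.cons z y) - m)) ∂π' ∂(ν 0) := by
      rw [hcomp (fun x => Real.exp (t * (f x - m)))]
      exact integral_prod _ hexpint
    have inner_eq : ∀ z, ∫ y, Real.exp (t * (f (Fin.cons z y) - m)) ∂π'
        = Real.exp (t * (H z - m)) * ∫ y, Real.exp (t * (f (Fin.cons z y) - H z)) ∂π' := by
      intro z
      have hpt : ∀ y, Real.exp (t * (f (Fin.cons z y) - m))
          = Real.exp (t * (H z - m)) * Real.exp (t * (f (Fin.cons z y) - H z)) := by
        intro y
        rw [← Real.exp_add]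
        congr 1
        ring
      simp_rw [hpt]
      rw [integral_const_mul]
    have hIH : ∀ z, ∫ y, Real.exp (t * (f (Fin.cons z y) - H z)) ∂π'
        ≤ Real.exp (n * (t ^ 2 * c ^ 2 / 2)) := by
      intro z
      have hoscz : ∀ (x y : Fin n → ℂ) (i : Fin n), (∀ j, j ≠ i → x j = y j) →
          |f (Fin.cons z x) - f (Fin.cons z y)| ≤ c := by
        intro x y i hxy
        apply hosc _ _ i.succ
        intro j
        refine Fin.cases ?_ ?_ j
        · intro _; simp
        · intro k hk
          simp only [Fin.cons_succ]
          exact hxy k (fun h => hk (by rw [h]))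
      have := IH (fun j => ν j.succ) (fun j => hν j.succ) (fun y => f (Fin.cons z y))
        (hf.comp (measurable_cons_snd n z)) B (fun y => hB _) c
        (fun x y i hxy => hoscz x y i hxy) t
      exact this
    have innersm : StronglyMeasurable (fun z =>
        ∫ y, Real.exp (t * (f (Fin.cons z y) - m)) ∂π') := by
      have hsm : StronglyMeasurable (fun p : ℂ × (Fin n → ℂ) =>
          Real.exp (t * (f (Fin.cons p.1 p.2) - m))) :=
        (Real.measurable_exp.comp ((measurable_const.mul
          ((hf.comp (measurable_cons_pair n)).sub measurable_const)))).stronglyMeasurable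
      exact hsm.integral_prod_right'
    have hint1 : Integrable (fun z => ∫ y, Real.exp (t * (f (Fin.cons z y) - m)) ∂π') (ν 0) := by
      apply integrable_of_abs_le _ _ innersm.measurable (Real.exp (|t| * (B + |m|)))
      intro z
      have h1 : |∫ y, Real.exp (t * (f (Fin.cons z y) - m)) ∂π'|
          ≤ ∫ y, |Real.exp (t * (f (Fin.cons z y) - m))| ∂π' := by
        simpa [Real.norm_eq_abs] using norm_integral_le_integral_norm (μ := π')
          (fun y => Real.exp (t * (f (Fin.cons z y) - m)))
      have h2 : ∫ y, |Real.exp (t * (f (Fin.cons z y) - m))| ∂π'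
          ≤ ∫ _, Real.exp (|t| * (B + |m|)) ∂π' := by
        apply integral_mono _ (integrable_const _) (fun y => hexpC _)
        exact (integrable_of_abs_le _ _
          (Real.measurable_exp.comp ((measurable_const.mul
            ((hf.comp (measurable_cons_snd n z)).sub measurable_const))))
          _ (fun y => hexpC _)).abs
      rw [integral_const, probReal_univ] at h2
      simp only [ENNReal.toReal_one, smul_eq_mul, one_mul] at h2
      linarith
    have hHexpm : Measurable (fun z => Real.exp (t * (H z - m))) :=
      Real.measurable_exp.comp (measurable_const.mul (hHm.sub measurable_const))
    have hint2 : Integrable (fun z => Real.exp (t * (H z - m))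
        * Real.exp (n * (t ^ 2 * c ^ 2 / 2))) (ν 0) := by
      apply integrable_of_abs_le _ _ (hHexpm.mul_const _)
        (Real.exp (|t| * (B + |m|)) * Real.exp (n * (t ^ 2 * c ^ 2 / 2)))
      intro z
      rw [abs_mul, abs_of_pos (Real.exp_pos _), abs_of_pos (Real.exp_pos _)]
      apply mul_le_mul_of_nonneg_right _ (Real.exp_pos _).le
      rw [Real.exp_le_exp]
      calc t * (H z - m) ≤ |t * (H z - m)| := le_abs_self _
        _ = |t| * |H z - m| := abs_mul _ _
        _ ≤ |t| * (B + |m|) := by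
            apply mul_le_mul_of_nonneg_left _ (abs_nonneg t)
            calc |H z - m| ≤ |H z| + |m| := abs_sub _ _
              _ ≤ B + |m| := by have := hHB z; linarith
    have hHmean : ∫ z, H z ∂(ν 0) = m := by
      have h2 : ∫ p : ℂ × (Fin n → ℂ), f (Fin.cons p.1 p.2) ∂ρ
          = ∫ z, ∫ y, f (Fin.cons z y) ∂π' ∂(ν 0) :=
        integral_prod _ (integrable_of_abs_le _ _
          (hf.comp (measurable_cons_pair n)) B (fun p => hB _))
      rw [hm, hcomp f, h2]
    calc ∫ x, Real.exp (t * (f x - m)) ∂(Measure.pi ν)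
        = ∫ z, ∫ y, Real.exp (t * (f (Fin.cons z y) - m)) ∂π' ∂(ν 0) := key
      _ ≤ ∫ z, Real.exp (t * (H z - m)) * Real.exp (n * (t ^ 2 * c ^ 2 / 2)) ∂(ν 0) := by
          apply integral_mono hint1 hint2
          intro z
          dsimp only
          rw [inner_eq z]
          exact mul_le_mul_of_nonneg_left (hIH z) (Real.exp_pos _).le
      _ = (∫ z, Real.exp (t * (H z - m)) ∂(ν 0)) * Real.exp (n * (t ^ 2 * c ^ 2 / 2)) :=
          integral_mul_const _ _
      _ ≤ Real.exp (t ^ 2 * c ^ 2 / 2) * Real.exp (n * (t ^ 2 * c ^ 2 / 2)) := by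
          apply mul_le_mul_of_nonneg_right _ (Real.exp_pos _).le
          have := one_step (ν 0) H hHm c t hHosc
          rwa [hHmean] at this
      _ = Real.exp ((n + 1 : ℕ) * (t ^ 2 * c ^ 2 / 2)) := by
          rw [← Real.exp_add]
          congr 1
          push_cast
          ring
lemma ofdm_norm_le (n : ℕ) (T : ℝ) (x : Fin n → ℂ) (t : ℝ) :
    ‖ofdm n T x t‖ ≤ (Real.sqrt n)⁻¹ * ∑ i : Fin n, ‖x i‖ := by
  rw [ofdm, norm_mul]
  have h1 : ‖(((Real.sqrt n : ℝ) : ℂ))⁻¹‖ = (Real.sqrt n)⁻¹ := by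
    rw [norm_inv, Complex.norm_real, Real.norm_eq_abs, abs_of_nonneg (Real.sqrt_nonneg _)]
  rw [h1]
  apply mul_le_mul_of_nonneg_left _ (by positivity)
  refine (norm_sum_le _ _).trans ?_
  apply Finset.sum_le_sum
  intro i _
  rw [norm_mul]
  have h2 : ‖Complex.exp (Complex.I * ((2 * Real.pi * (i : ℕ) * t / T : ℝ) : ℂ))‖ = 1 := by
    rw [mul_comm]
    exact Complex.norm_exp_ofReal_mul_I _
  rw [h2, mul_one]

lemma ofdm_sub (n : ℕ) (T : ℝ) (x y : Fin n → ℂ) (t : ℝ) :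
    ofdm n T x t - ofdm n T y t = ofdm n T (x - y) t := by
  rw [ofdm, ofdm, ofdm, ← mul_sub, ← Finset.sum_sub_distrib]
  congr 1
  apply Finset.sum_congr rfl
  intro i _
  simp [sub_mul]

lemma bddAbove_ofdm (n : ℕ) (T : ℝ) (x : Fin n → ℂ) :
    BddAbove ((fun t => ‖ofdm n T x t‖) '' Set.Icc (0 : ℝ) T) := by
  refine ⟨(Real.sqrt n)⁻¹ * ∑ i : Fin n, ‖x i‖, ?_⟩
  rintro v ⟨t, _, rfl⟩
  exact ofdm_norm_le n T x t

lemma crest_le_add (n : ℕ) (T : ℝ) (hT : 0 ≤ T) (x y : Fin n → ℂ) :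
    crest n T x ≤ crest n T y + (Real.sqrt n)⁻¹ * ∑ i : Fin n, ‖x i - y i‖ := by
  rw [crest]
  apply csSup_le (((Set.nonempty_Icc).mpr hT).image _)
  rintro v ⟨t, ht, rfl⟩
  have h1 : ‖ofdm n T x t‖ ≤ ‖ofdm n T y t‖ + (Real.sqrt n)⁻¹ * ∑ i : Fin n, ‖x i - y i‖ := by
    have h2 := norm_sub_norm_le (ofdm n T x t) (ofdm n T y t)
    have h3 : ‖ofdm n T x t - ofdm n T y t‖ ≤ (Real.sqrt n)⁻¹ * ∑ i : Fin n, ‖x i - y i‖ := by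
      rw [ofdm_sub]
      simpa using ofdm_norm_le n T (x - y) t
    linarith
  have h4 : ‖ofdm n T y t‖ ≤ crest n T y :=
    le_csSup (bddAbove_ofdm n T y) (Set.mem_image_of_mem _ ht)
  linarith

lemma crest_abs_sub (n : ℕ) (T : ℝ) (hT : 0 ≤ T) (x y : Fin n → ℂ) :
    |crest n T x - crest n T y| ≤ (Real.sqrt n)⁻¹ * ∑ i : Fin n, ‖x i - y i‖ := by
  rw [abs_sub_le_iff]
  constructor
  · have := crest_le_add n T hT x y; linarith
  · have := crest_le_add n T hT y x
    have he : ∑ i : Fin n, ‖y i - x i‖ = ∑ i : Fin n, ‖x i - y i‖ :=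
      Finset.sum_congr rfl (fun i _ => norm_sub_rev _ _)
    rw [he] at this
    linarith

lemma crest_nonneg (n : ℕ) (T : ℝ) (hT : 0 ≤ T) (x : Fin n → ℂ) : 0 ≤ crest n T x := by
  have h : ‖ofdm n T x 0‖ ≤ crest n T x :=
    le_csSup (bddAbove_ofdm n T x) (Set.mem_image_of_mem _ (Set.left_mem_Icc.mpr hT))
  exact le_trans (norm_nonneg _) h

lemma crest_le (n : ℕ) (T : ℝ) (hT : 0 ≤ T) (x : Fin n → ℂ) :
    crest n T x ≤ (Real.sqrt n)⁻¹ * ∑ i : Fin n, ‖x i‖ := by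
  apply csSup_le (((Set.nonempty_Icc).mpr hT).image _)
  rintro v ⟨t, _, rfl⟩
  exact ofdm_norm_le n T x t

lemma crest_continuous (n : ℕ) (T : ℝ) (hT : 0 ≤ T) : Continuous (crest n T) := by
  apply LipschitzWith.continuous (K := ⟨(Real.sqrt n)⁻¹ * n, by positivity⟩)
  apply LipschitzWith.of_dist_le_mul
  intro x y
  rw [Real.dist_eq]
  refine (crest_abs_sub n T hT x y).trans ?_
  have h1 : ∑ i : Fin n, ‖x i - y i‖ ≤ ∑ _i : Fin n, dist x y := by
    apply Finset.sum_le_sum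
    intro i _
    rw [← dist_eq_norm]
    exact dist_le_pi_dist x y i
  rw [Finset.sum_const, Finset.card_univ, Fintype.card_fin, nsmul_eq_mul] at h1
  show (Real.sqrt n)⁻¹ * ∑ i : Fin n, ‖x i - y i‖ ≤ ((Real.sqrt n)⁻¹ * n) * dist x y
  rw [mul_assoc]
  exact mul_le_mul_of_nonneg_left h1 (by positivity)
lemma map_eq_pi {Ω : Type*} [MeasurableSpace Ω] (μ : Measure Ω) [IsProbabilityMeasure μ]
    (n : ℕ) (Y : Fin n → Ω → ℂ) (hm : ∀ j, Measurable (Y j))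
    (hind : ProbabilityTheory.iIndepFun Y μ) :
    μ.map (fun ω j => Y j ω) = Measure.pi (fun j => μ.map (Y j)) := by
  haveI : ∀ j, IsProbabilityMeasure (μ.map (Y j)) :=
    fun j => Measure.isProbabilityMeasure_map (hm j).aemeasurable
  refine (Measure.pi_eq ?_).symm
  intro s hs
  rw [Measure.map_apply (measurable_pi_lambda _ (fun j => hm j)) (MeasurableSet.univ_pi hs)]
  have h1 : (fun ω (j : Fin n) => Y j ω) ⁻¹' (Set.pi Set.univ s) = ⋂ j ∈ Finset.univ, Y j ⁻¹' s j := by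
    ext ω; simp [Set.mem_pi]
  rw [h1]
  rw [(ProbabilityTheory.iIndepFun_iff_measure_inter_preimage_eq_mul.mp hind)
    Finset.univ (fun i _ => hs i)]
  exact Finset.prod_congr rfl fun j _ =>
    (Measure.map_apply (hm j) (hs j)).symm

theorem stmt_5 {Ω : Type*} [MeasurableSpace Ω] (μ : Measure Ω) [IsProbabilityMeasure μ]
    (n : ℕ) (hn : 0 < n) (T : ℝ) (hT : 0 < T)
    (X : Fin n → Ω → ℂ) (hmeas : ∀ j, Measurable (X j))
    (hindep : ProbabilityTheory.iIndepFun X μ)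
    (hunit : ∀ j, ∀ᵐ ω ∂μ, ‖X j ω‖ = 1)
    (α : ℝ) (hα : 0 ≤ α) :
    (μ {ω | α ≤ |crest n T (fun j => X j ω) -
        ∫ ω', crest n T (fun j => X j ω') ∂μ|}).toReal ≤
      2 * Real.exp (-α ^ 2 / 8) := by
  classical
  set P : ℂ → ℂ := fun z => if ‖z‖ = 1 then z else 1 with hP
  have hsetm : MeasurableSet {z : ℂ | ‖z‖ = 1} := measurable_norm (measurableSet_singleton 1)
  have hPm : Measurable P := Measurable.ite hsetm measurable_id measurable_const
  have hPnorm : ∀ z, ‖P z‖ = 1 := by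
    intro z
    show ‖if ‖z‖ = 1 then z else 1‖ = 1
    split_ifs with h
    · exact h
    · simp
  have hPeq : ∀ z, ‖z‖ = 1 → P z = z := fun z h => by
    show (if ‖z‖ = 1 then z else 1) = z
    rw [if_pos h]
  set Y : Fin n → Ω → ℂ := fun j ω => P (X j ω) with hY
  have hYm : ∀ j, Measurable (Y j) := fun j => hPm.comp (hmeas j)
  have hYunit : ∀ j ω, ‖Y j ω‖ = 1 := fun j ω => hPnorm _
  have hae : ∀ᵐ ω ∂μ, ∀ j, Y j ω = X j ω := by
    rw [ae_all_iff]
    intro j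
    filter_upwards [hunit j] with ω h
    exact hPeq _ h
  have hYind : ProbabilityTheory.iIndepFun Y μ :=
    hindep.comp (fun _ => P) (fun _ => hPm)
  set F : (Fin n → ℂ) → ℝ := fun x => crest n T (fun j => P (x j)) with hF
  have hPim : Measurable (fun (x : Fin n → ℂ) (j : Fin n) => P (x j)) :=
    measurable_pi_lambda _ (fun j => hPm.comp (measurable_pi_apply j))
  have hFm : Measurable F := (crest_continuous n T hT.le).measurable.comp hPim
  have hsq : (0:ℝ) < Real.sqrt n := Real.sqrt_pos.mpr (by exact_mod_cast hn)
  have hFB : ∀ x, |F x| ≤ Real.sqrt n := by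
    intro x
    rw [abs_of_nonneg (crest_nonneg n T hT.le _)]
    refine (crest_le n T hT.le _).trans ?_
    have h1 : ∑ j : Fin n, ‖P (x j)‖ = (n : ℝ) := by simp [hPnorm]
    rw [h1, inv_mul_le_iff₀ hsq, Real.mul_self_sqrt (by positivity)]
  set c : ℝ := (Real.sqrt n)⁻¹ * 2 with hc
  have hosc : ∀ (x y : Fin n → ℂ) (i : Fin n), (∀ j, j ≠ i → x j = y j) → |F x - F y| ≤ c := by
    intro x y i hxy
    refine (crest_abs_sub n T hT.le _ _).trans ?_
    rw [hc]
    apply mul_le_mul_of_nonneg_left _ (by positivity)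
    have hz : ∀ j ∈ Finset.univ, j ≠ i → ‖P (x j) - P (y j)‖ = 0 := fun j _ hj => by
      rw [hxy j hj]; simp
    rw [Finset.sum_eq_single i hz (by simp)]
    calc ‖P (x i) - P (y i)‖ ≤ ‖P (x i)‖ + ‖P (y i)‖ := norm_sub_le _ _
      _ = 2 := by rw [hPnorm, hPnorm]; norm_num
  set ν : Fin n → Measure ℂ := fun j => μ.map (Y j) with hν
  haveI hνp : ∀ j, IsProbabilityMeasure (ν j) :=
    fun j => Measure.isProbabilityMeasure_map (hYm j).aemeasurable
  haveI : IsProbabilityMeasure (Measure.pi ν) := inferInstance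
  set Z : Ω → (Fin n → ℂ) := fun ω j => Y j ω with hZ
  have hZm : Measurable Z := measurable_pi_lambda _ (fun j => hYm j)
  have hmap : μ.map Z = Measure.pi ν := map_eq_pi μ n Y hYm hYind
  set m : ℝ := ∫ x, F x ∂(Measure.pi ν) with hm
  have hFZ : ∀ ω, F (Z ω) = crest n T (fun j => Y j ω) := by
    intro ω
    simp only [hF, hZ]
    congr 1
    funext j
    exact hPeq _ (hYunit j ω)
  have hcrest_ae : ∀ᵐ ω ∂μ, crest n T (fun j => X j ω) = F (Z ω) := by
    filter_upwards [hae] with ω h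
    rw [hFZ ω]
    congr 1
    funext j
    rw [h j]
  have hmean_eq : (∫ ω', crest n T (fun j => X j ω') ∂μ) = m := by
    rw [integral_congr_ae hcrest_ae, hm, ← hmap,
      integral_map hZm.aemeasurable hFm.aestronglyMeasurable]
  have hAmeas : MeasurableSet {x : Fin n → ℂ | α ≤ |F x - m|} :=
    measurableSet_le measurable_const ((hFm.sub measurable_const).abs)
  have hset : μ {ω | α ≤ |crest n T (fun j => X j ω) -
      ∫ ω', crest n T (fun j => X j ω') ∂μ|} = (Measure.pi ν) {x | α ≤ |F x - m|} := by
    have h1 : {ω | α ≤ |crest n T (fun j => X j ω) - ∫ ω', crest n T (fun j => X j ω') ∂μ|}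
        =ᵐ[μ] (Z ⁻¹' {x | α ≤ |F x - m|}) := by
      apply Filter.eventuallyEq_set.mpr
      filter_upwards [hcrest_ae] with ω h
      simp only [Set.mem_setOf_eq, Set.mem_preimage, hmean_eq, h]
    rw [measure_congr h1, ← Measure.map_apply hZm hAmeas, hmap]
  have hmgft : ∀ t : ℝ, ProbabilityTheory.mgf (fun x => F x - m) (Measure.pi ν) t
      ≤ Real.exp ((n:ℝ) * (t ^ 2 * c ^ 2 / 2)) := by
    intro t
    have h := mcdiarmid_mgf n ν hνp F hFm (Real.sqrt n) hFB c hosc t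
    rw [← hm] at h
    exact h
  have hintt : ∀ t : ℝ, Integrable (fun x => Real.exp (t * (F x - m))) (Measure.pi ν) := by
    intro t
    apply integrable_of_abs_le _ _
      (Real.measurable_exp.comp (measurable_const.mul (hFm.sub measurable_const)))
      (Real.exp (|t| * (Real.sqrt n + |m|)))
    intro x
    show |Real.exp (t * (F x - m))| ≤ Real.exp (|t| * (Real.sqrt n + |m|))
    rw [abs_of_pos (Real.exp_pos _), Real.exp_le_exp]
    calc t * (F x - m) ≤ |t * (F x - m)| := le_abs_self _
      _ = |t| * |F x - m| := abs_mul _ _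
      _ ≤ |t| * (Real.sqrt n + |m|) := by
          apply mul_le_mul_of_nonneg_left _ (abs_nonneg _)
          calc |F x - m| ≤ |F x| + |m| := abs_sub _ _
            _ ≤ Real.sqrt n + |m| := by have := hFB x; linarith
  have hc2 : (n:ℝ) * ((α/4) ^ 2 * c ^ 2 / 2) = α ^ 2 / 8 := by
    have hn' : ((n:ℝ)) ≠ 0 := by exact_mod_cast hn.ne'
    have hcsq : c ^ 2 = 4 / (n:ℝ) := by
      rw [hc, mul_pow, inv_pow, Real.sq_sqrt (by positivity), div_eq_mul_inv]
      ring
    rw [hcsq]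
    field_simp
    ring
  have hup : ((Measure.pi ν) {x | α ≤ F x - m}).toReal ≤ Real.exp (-α ^ 2 / 8) := by
    have hch := ProbabilityTheory.measure_ge_le_exp_mul_mgf (μ := Measure.pi ν)
      (X := fun x => F x - m) (t := α/4) α (by positivity) (hintt (α/4))
    refine hch.trans ?_
    calc Real.exp (-(α/4) * α) * ProbabilityTheory.mgf (fun x => F x - m) (Measure.pi ν) (α/4)
        ≤ Real.exp (-(α/4) * α) * Real.exp ((n:ℝ) * ((α/4) ^ 2 * c ^ 2 / 2)) :=
          mul_le_mul_of_nonneg_left (hmgft _) (Real.exp_pos _).le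
      _ = Real.exp (-α ^ 2 / 8) := by
          rw [← Real.exp_add, hc2]
          congr 1
          ring
  have hdn : ((Measure.pi ν) {x | F x - m ≤ -α}).toReal ≤ Real.exp (-α ^ 2 / 8) := by
    have hch := ProbabilityTheory.measure_le_le_exp_mul_mgf (μ := Measure.pi ν)
      (X := fun x => F x - m) (t := -(α/4)) (-α) (by linarith) (hintt (-(α/4)))
    refine hch.trans ?_
    calc Real.exp (-(-(α/4)) * (-α)) * ProbabilityTheory.mgf (fun x => F x - m) (Measure.pi ν) (-(α/4))
        ≤ Real.exp (-(-(α/4)) * (-α)) * Real.exp ((n:ℝ) * ((-(α/4)) ^ 2 * c ^ 2 / 2)) :=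
          mul_le_mul_of_nonneg_left (hmgft _) (Real.exp_pos _).le
      _ = Real.exp (-α ^ 2 / 8) := by
          rw [show ((-(α/4)) ^ 2 : ℝ) = (α/4) ^ 2 by ring, ← Real.exp_add, hc2]
          congr 1
          ring
  rw [hset]
  have hsub : {x : Fin n → ℂ | α ≤ |F x - m|}
      ⊆ {x | α ≤ F x - m} ∪ {x | F x - m ≤ -α} := by
    intro x hx
    have hx' : α ≤ |F x - m| := hx
    rcases le_abs.mp hx' with h | h
    · exact Or.inl h
    · exact Or.inr (show F x - m ≤ -α by linarith)
  calc ((Measure.pi ν) {x | α ≤ |F x - m|}).toReal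
      ≤ ((Measure.pi ν) ({x | α ≤ F x - m} ∪ {x | F x - m ≤ -α})).toReal :=
        ENNReal.toReal_mono (measure_ne_top _ _) (measure_mono hsub)
    _ ≤ ((Measure.pi ν) {x | α ≤ F x - m} + (Measure.pi ν) {x | F x - m ≤ -α}).toReal :=
        ENNReal.toReal_mono
          (ENNReal.add_ne_top.mpr ⟨measure_ne_top _ _, measure_ne_top _ _⟩)
          (measure_union_le _ _)
    _ = ((Measure.pi ν) {x | α ≤ F x - m}).toReal
        + ((Measure.pi ν) {x | F x - m ≤ -α}).toReal :=
        ENNReal.toReal_add (measure_ne_top _ _) (measure_ne_top _ _)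
    _ ≤ Real.exp (-α ^ 2 / 8) + Real.exp (-α ^ 2 / 8) := add_le_add hup hdn
    _ = 2 * Real.exp (-α ^ 2 / 8) := by ring
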